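/- For every integer k ≥ 2, every r > 0 and every α > 0, there exists β₀ > 0 such that for all β with 0 < β ≤ β₀ the following holds. Let u_j = (cos(2πj/k), sin(2πj/k)) for j = 0, …, k−1, let the target set be T = {α·u_j : 0 ≤ j < k}, and let the station set be P = {(r + α + β)·u_j : 0 ≤ j < k}. Then: (i) the finite set {(r + α)·u_j : 0 ≤ j < k} covers T and has cost at most k·β; and (ii) every finite set S ⊆ ℝ² that covers T and has cost at most k·β satisfies |S| ≥ k. In particular, every optimal solution uses at least k sensors. -/

import Mathlib

/-- The set of points covered by a finite set `S` of sensors with sensing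
radius `r` includes every target: for each `t ∈ T` there is `s ∈ S` with
`dist s t ≤ r`. -/
def Covers (r : ℝ) (T : Set (EuclideanSpace ℝ (Fin 2)))
    (S : Finset (EuclideanSpace ℝ (Fin 2))) : Prop :=
  ∀ t ∈ T, ∃ s ∈ S, dist s t ≤ r

/-- The total moving cost of a sensor set `S`: each sensor moves from its
nearest station in `P`. -/
noncomputable def cost (P S : Finset (EuclideanSpace ℝ (Fin 2))) : ℝ :=
  ∑ s ∈ S, Metric.infDist s (P : Set (EuclideanSpace ℝ (Fin 2)))

/-- `S` is an optimal solution: it covers `T` and has minimum cost among all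
finite sensor sets covering `T`. -/
def Optimal (r : ℝ) (P : Finset (EuclideanSpace ℝ (Fin 2)))
    (T : Set (EuclideanSpace ℝ (Fin 2)))
    (S : Finset (EuclideanSpace ℝ (Fin 2))) : Prop :=
  Covers r T S ∧
    ∀ S' : Finset (EuclideanSpace ℝ (Fin 2)), Covers r T S' → cost P S ≤ cost P S'

open Real Metric RealInnerProductSpace Finset
lemma unorm (v : EuclideanSpace ℝ (Fin 2)) (x : ℝ)
    (h0 : v 0 = Real.cos x) (h1 : v 1 = Real.sin x) : ‖v‖ = 1 := by
  rw [EuclideanSpace.norm_eq, Fin.sum_univ_two, h0, h1]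
  simp [Real.norm_eq_abs, sq_abs, Real.sin_sq_add_cos_sq]

lemma uinner (v w : EuclideanSpace ℝ (Fin 2)) (x y : ℝ)
    (h0 : v 0 = Real.cos x) (h1 : v 1 = Real.sin x)
    (g0 : w 0 = Real.cos y) (g1 : w 1 = Real.sin y) : ⟪v, w⟫ = Real.cos (x - y) := by
  rw [PiLp.inner_apply, Fin.sum_univ_two, h0, h1, g0, g1, Real.cos_sub]
  simp [mul_comm]

lemma sqle {a b : ℝ} (ha : 0 ≤ a) (hb : 0 ≤ b) (h : a ^ 2 ≤ b ^ 2) : a ≤ b := by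
  nlinarith

lemma sq_trick {A B X Y rr : ℝ} (hA : 0 ≤ A) (hrr : 0 ≤ rr)
    (h : A * A + B * B = 2 * (X * X + Y * Y))
    (hX0 : 0 ≤ X) (hY0 : 0 ≤ Y) (hX : X ≤ rr) (hY : Y ≤ rr) : A ≤ 2 * rr := by
  nlinarith [mul_self_nonneg B]

lemma cos_le_cos_aux {c x : ℝ} (hc : 0 ≤ c) (h1 : c ≤ x) (h2 : x ≤ 2*π - c) :
    Real.cos x ≤ Real.cos c := by
  rcases le_or_gt x π with h | h
  · exact Real.cos_le_cos_of_nonneg_of_le_pi hc h h1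
  · rw [← Real.cos_two_pi_sub]
    exact Real.cos_le_cos_of_nonneg_of_le_pi hc (by linarith) (by linarith)

lemma cos_diff_le {k i j : ℕ} (hk : 2 ≤ k) (hi : i < k) (hj : j < k) (hij : i ≠ j) :
    Real.cos (2*π*i/k - 2*π*j/k) ≤ Real.cos (2*π/k) := by
  have hkpos : (0:ℝ) < k := by positivity
  have hpi := Real.pi_pos
  wlog hji : j < i generalizing i j
  · rw [show 2*π*i/k - 2*π*j/k = -(2*π*j/k - 2*π*i/k) by ring, Real.cos_neg]
    exact this hj hi hij.symm (by omega)
  have hji' : (j:ℝ) + 1 ≤ i := by exact_mod_cast hji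
  have hik : (i:ℝ) + 1 ≤ k := by exact_mod_cast hi
  have hjnn : (0:ℝ) ≤ j := Nat.cast_nonneg j
  have hx : 2*π*(i:ℝ)/k - 2*π*j/k = (2*π*i - 2*π*j)/k := by ring
  apply cos_le_cos_aux (by positivity)
  · rw [hx, div_le_div_iff₀ hkpos hkpos]
    have key1 : 2*π ≤ 2*π*(i:ℝ) - 2*π*j := by
      nlinarith [mul_nonneg hpi.le (show (0:ℝ) ≤ (i:ℝ)-j-1 by linarith)]
    exact mul_le_mul_of_nonneg_right key1 hkpos.le
  · rw [hx, show 2*π - 2*π/k = (2*π*k - 2*π)/k by field_simp, div_le_div_iff₀ hkpos hkpos]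
    have key2 : 2*π*(i:ℝ) - 2*π*j ≤ 2*π*k - 2*π := by
      nlinarith [mul_nonneg hpi.le (show (0:ℝ) ≤ (k:ℝ)-1-((i:ℝ)-j) by linarith)]
    exact mul_le_mul_of_nonneg_right key2 hkpos.le

set_option maxHeartbeats 1000000 in
open Classical in
theorem stmt_14 (k : ℕ) (hk : 2 ≤ k) (r α : ℝ) (hr : 0 < r) (hα : 0 < α) :
    ∃ β₀ > (0 : ℝ), ∀ β : ℝ, 0 < β → β ≤ β₀ →
      ∀ u : ℕ → EuclideanSpace ℝ (Fin 2),
        (∀ j : ℕ, u j = ![Real.cos (2 * Real.pi * j / k),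
            Real.sin (2 * Real.pi * j / k)]) →
        ∀ T : Set (EuclideanSpace ℝ (Fin 2)),
          T = {t | ∃ j : ℕ, j < k ∧ t = α • u j} →
        ∀ P : Finset (EuclideanSpace ℝ (Fin 2)),
          P = (Finset.range k).image (fun j => (r + α + β) • u j) →
        (Covers r T ((Finset.range k).image (fun j => (r + α) • u j)) ∧
          cost P ((Finset.range k).image (fun j => (r + α) • u j)) ≤ k * β) ∧
        (∀ S : Finset (EuclideanSpace ℝ (Fin 2)),
          Covers r T S → cost P S ≤ k * β → k ≤ S.card) := by
  have hkpos : (0:ℝ) < k := by positivity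
  have hpi := Real.pi_pos
  have hpik_pos : 0 < π / k := by positivity
  have hpik_le : π / k ≤ π / 2 := by
    apply div_le_div_of_nonneg_left hpi.le (by norm_num)
    exact_mod_cast hk
  have hcos_nonneg : 0 ≤ Real.cos (π / k) :=
    Real.cos_nonneg_of_mem_Icc ⟨by linarith, hpik_le⟩
  have hcos_lt_one : Real.cos (π / k) < 1 := by
    have := Real.cos_lt_cos_of_nonneg_of_le_pi (le_refl 0) (by linarith) hpik_pos
    simpa using this
  set D : ℝ := α * (1 - Real.cos (π / k)) with hD
  have hDpos : 0 < D := by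
    apply mul_pos hα; linarith
  refine ⟨D / (2 * k), by positivity, ?_⟩
  intro β hβ hβ₀ u hu T hT P hP
  -- coordinates of u
  have h0 : ∀ j : ℕ, u j 0 = Real.cos (2 * π * j / k) := fun j => by rw [hu j]; rfl
  have h1 : ∀ j : ℕ, u j 1 = Real.sin (2 * π * j / k) := fun j => by rw [hu j]; rfl
  have hun : ∀ j : ℕ, ‖u j‖ = 1 := fun j => unorm _ _ (h0 j) (h1 j)
  constructor
  · constructor
    · -- coverage
      intro t ht
      rw [hT] at ht
      obtain ⟨j, hj, rfl⟩ := ht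
      refine ⟨(r + α) • u j, Finset.mem_image.2 ⟨j, Finset.mem_range.2 hj, rfl⟩, ?_⟩
      rw [dist_eq_norm, ← sub_smul, show r + α - α = r by ring, norm_smul, hun j,
        Real.norm_eq_abs, abs_of_pos hr, mul_one]
    · -- cost of the canonical solution
      set img := (Finset.range k).image (fun j => (r + α) • u j) with himg
      have hbd : ∀ s ∈ img, infDist s (P : Set (EuclideanSpace ℝ (Fin 2))) ≤ β := by
        intro s hs
        obtain ⟨j, hjr, rfl⟩ := Finset.mem_image.1 hs
        have hmem : (r + α + β) • u j ∈ (P : Set (EuclideanSpace ℝ (Fin 2))) := by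
          rw [hP]
          exact Finset.mem_coe.2 (Finset.mem_image.2 ⟨j, hjr, rfl⟩)
        refine le_trans (infDist_le_dist_of_mem hmem) ?_
        rw [dist_eq_norm, ← sub_smul, show r + α - (r + α + β) = -β by ring, norm_smul,
          hun j, Real.norm_eq_abs, abs_neg, abs_of_pos hβ, mul_one]
      calc cost P img ≤ img.card • β := Finset.sum_le_card_nsmul _ _ _ hbd
        _ = (img.card : ℝ) * β := by rw [nsmul_eq_mul]
        _ ≤ (k : ℝ) * β := by
            apply mul_le_mul_of_nonneg_right _ hβ.le
            have : img.card ≤ k := le_trans Finset.card_image_le (by simp)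
            exact_mod_cast this
  · -- lower bound on the number of sensors
    intro S hS hcost
    by_contra hcard
    push_neg at hcard
    have hgs : ∀ j : ℕ, ∃ s, j < k → s ∈ S ∧ dist s (α • u j) ≤ r := by
      intro j
      by_cases h : j < k
      · obtain ⟨s, hs, hd⟩ := hS (α • u j) (by rw [hT]; exact ⟨j, h, rfl⟩)
        exact ⟨s, fun _ => ⟨hs, hd⟩⟩
      · exact ⟨0, fun hc => absurd hc h⟩
    choose g hg using hgs
    obtain ⟨i, hi, j, hj, hij, hgij⟩ :=
      Finset.exists_ne_map_eq_of_card_lt_of_maps_to (t := S)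
        (by simpa using hcard)
        (fun a ha => (hg a (Finset.mem_range.1 ha)).1)
    rw [Finset.mem_range] at hi hj
    set s : EuclideanSpace ℝ (Fin 2) := g i with hs
    have ha : ‖s - α • u i‖ ≤ r := by
      rw [← dist_eq_norm]; exact (hg i hi).2
    have hb : ‖s - α • u j‖ ≤ r := by
      rw [← dist_eq_norm, hgij]; exact (hg j hj).2
    -- bound ‖u i + u j‖
    have hinner : ⟪u i, u j⟫ = Real.cos (2 * π * i / k - 2 * π * j / k) :=
      uinner _ _ _ _ (h0 i) (h1 i) (h0 j) (h1 j)
    have hcosle : Real.cos (2 * π * i / k - 2 * π * j / k) ≤ Real.cos (2 * π / k) :=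
      cos_diff_le hk hi hj hij
    have hc2 : Real.cos (2 * π / k) = 2 * Real.cos (π / k) ^ 2 - 1 := by
      rw [show 2 * π / k = 2 * (π / k) by ring, Real.cos_two_mul]
    have husum_sq : ‖u i + u j‖ ^ 2 ≤ (2 * Real.cos (π / k)) ^ 2 := by
      rw [norm_add_sq_real, hinner, hun i, hun j]
      nlinarith
    have husum : ‖u i + u j‖ ≤ 2 * Real.cos (π / k) :=
      sqle (norm_nonneg _) (by positivity) husum_sq
    -- bound ‖s‖
    have hpar := parallelogram_law_with_norm ℝ (s - α • u i) (s - α • u j)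
    simp only [sq] at hpar
    have hsum2 : ‖(s - α • u i) + (s - α • u j)‖ ≤ 2 * r :=
      sq_trick (norm_nonneg _) hr.le hpar (norm_nonneg _) (norm_nonneg _) ha hb
    have hss : s + s = ((s - α • u i) + (s - α • u j)) + (α • u i + α • u j) := by abel
    have h2s : 2 * ‖s‖ ≤ 2 * r + α * (2 * Real.cos (π / k)) := by
      have e1 : ‖s + s‖ = 2 * ‖s‖ := by
        rw [← two_smul ℝ s, norm_smul]; simp
      have e2 : ‖α • u i + α • u j‖ ≤ α * (2 * Real.cos (π / k)) := by
        rw [← smul_add, norm_smul, Real.norm_eq_abs, abs_of_pos hα]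
        exact mul_le_mul_of_nonneg_left husum hα.le
      calc 2 * ‖s‖ = ‖s + s‖ := e1.symm
        _ ≤ ‖(s - α • u i) + (s - α • u j)‖ + ‖α • u i + α • u j‖ := by
            rw [hss]; exact norm_add_le _ _
        _ ≤ 2 * r + α * (2 * Real.cos (π / k)) := add_le_add hsum2 e2
    have hsnorm : ‖s‖ ≤ r + α * Real.cos (π / k) := by linarith
    -- every station is far from s
    have hub : ∀ p ∈ (P : Set (EuclideanSpace ℝ (Fin 2))), β + D ≤ dist s p := by
      intro p hp
      rw [hP, Finset.mem_coe] at hp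
      obtain ⟨l, hl, rfl⟩ := Finset.mem_image.1 hp
      have hpn : ‖(r + α + β) • u l‖ = r + α + β := by
        rw [norm_smul, hun l, Real.norm_eq_abs, abs_of_pos (by linarith), mul_one]
      have : ‖(r + α + β) • u l‖ - ‖s‖ ≤ ‖s - (r + α + β) • u l‖ := by
        rw [norm_sub_rev]; exact norm_sub_norm_le _ _
      rw [dist_eq_norm]
      rw [hpn] at this
      have hDle : β + D ≤ (r + α + β) - ‖s‖ := by
        rw [hD]; nlinarith
      linarith
    have hPne : (P : Set (EuclideanSpace ℝ (Fin 2))).Nonempty := by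
      refine ⟨(r + α + β) • u 0, ?_⟩
      rw [hP]
      exact Finset.mem_coe.2 (Finset.mem_image.2 ⟨0, Finset.mem_range.2 (by omega), rfl⟩)
    have hinf : β + D ≤ infDist s (P : Set (EuclideanSpace ℝ (Fin 2))) := by
      by_contra h
      push_neg at h
      obtain ⟨y, hy, hlt⟩ := (infDist_lt_iff hPne).1 h
      exact absurd (hub y hy) (by linarith)
    have hle : infDist s (P : Set (EuclideanSpace ℝ (Fin 2))) ≤ cost P S := by
      have := Finset.single_le_sum
        (f := fun x => infDist x (P : Set (EuclideanSpace ℝ (Fin 2))))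
        (fun _ _ => infDist_nonneg) (hg i hi).1
      simpa [cost] using this
    have hkβ : (k : ℝ) * β ≤ D / 2 := by
      have := mul_le_mul_of_nonneg_left hβ₀ hkpos.le
      calc (k:ℝ) * β ≤ (k:ℝ) * (D / (2 * k)) := this
        _ = D / 2 := by field_simp
    linarith
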